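/- If X and Y are symmetric positive semidefinite n×n real matrices with the same kernel and e^{-ε}·X ⪯ Y ⪯ e^{ε}·X, then e^{-ε}·X⁺ ⪯ Y⁺ ⪯ e^{ε}·X⁺, where X⁺ denotes the Moore–Penrose pseudoinverse. -/

import Mathlib

open Matrix

private lemma flipDot {n : ℕ} (M : Matrix (Fin n) (Fin n) ℝ) (x y : Fin n → ℝ) :
    (M *ᵥ x) ⬝ᵥ y = x ⬝ᵥ (Mᵀ *ᵥ y) := by
  rw [dotProduct_mulVec, vecMul_transpose, dotProduct_comm]

private lemma tT {n : ℕ} (M N K : Matrix (Fin n) (Fin n) ℝ) :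
    (M * N * K)ᵀ = Kᵀ * Nᵀ * Mᵀ := by
  rw [transpose_mul, transpose_mul, Matrix.mul_assoc]

private lemma eq_of_mulVec {n : ℕ} (M N : Matrix (Fin n) (Fin n) ℝ)
    (h : ∀ v, M *ᵥ v = N *ᵥ v) : M = N := by
  ext i j
  have := congrFun (h (Pi.single j 1)) i
  simpa [mulVec_single] using this

private lemma var_ineq {n : ℕ} (A Ap : Matrix (Fin n) (Fin n) ℝ)
    (hA : A.PosSemidef) (hAs : Aᵀ = A) (hAp2 : Ap * A * Ap = Ap) (hAps : Apᵀ = Ap)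
    (u w : Fin n → ℝ) (hu : (A * Ap) *ᵥ u = u) :
    2 * (u ⬝ᵥ w) - w ⬝ᵥ (A *ᵥ w) ≤ u ⬝ᵥ (Ap *ᵥ u) := by
  have h0 := hA.dotProduct_mulVec_nonneg (w - Ap *ᵥ u)
  simp only [star_trivial] at h0
  rw [mulVec_sub, dotProduct_sub, sub_dotProduct, sub_dotProduct] at h0
  have e1 : w ⬝ᵥ (A *ᵥ (Ap *ᵥ u)) = u ⬝ᵥ w := by
    rw [mulVec_mulVec, hu, dotProduct_comm]
  have e2 : (Ap *ᵥ u) ⬝ᵥ (A *ᵥ w) = u ⬝ᵥ w := by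
    rw [flipDot, hAps, mulVec_mulVec]
    rw [show Ap * A = (A * Ap)ᵀ from by rw [transpose_mul, hAs, hAps], ← flipDot, hu]
  have e3 : (Ap *ᵥ u) ⬝ᵥ (A *ᵥ (Ap *ᵥ u)) = u ⬝ᵥ (Ap *ᵥ u) := by
    rw [flipDot, hAps, mulVec_mulVec, mulVec_mulVec, hAp2]
  rw [e1, e2, e3] at h0
  linarith

/-- From the four Moore-Penrose axioms for a symmetric matrix, the pseudoinverse is
symmetric and commutes with the matrix. -/
private lemma mp_symm {n : ℕ} (A Ap : Matrix (Fin n) (Fin n) ℝ) (hAs : Aᵀ = A)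
    (h1 : A * Ap * A = A) (h2 : Ap * A * Ap = Ap)
    (h3 : (Ap * A)ᵀ = Ap * A) (h4 : (A * Ap)ᵀ = A * Ap) :
    Apᵀ = Ap ∧ A * Ap = Ap * A := by
  have s1 : A * Apᵀ = Ap * A := by
    rw [← h3, transpose_mul, hAs]
  have s2 : Apᵀ * A = A * Ap := by
    rw [← h4, transpose_mul, hAs]
  have hC1 : A * Apᵀ * A = A := by
    have := congrArg Matrix.transpose h1
    rw [tT, hAs] at this
    rw [Matrix.mul_assoc] at this ⊢
    exact this
  have hcomm : A * Ap = Ap * A := by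
    have t1 : A * Ap = (Ap * A) * (A * Ap) := by
      conv_lhs => rw [← hC1]
      rw [Matrix.mul_assoc (A * Apᵀ), s1]
    have t2 : Ap * A = (Ap * A) * (A * Ap) := by
      conv_lhs => rw [← hC1]
      rw [Matrix.mul_assoc A Apᵀ A, s2]
      simp only [Matrix.mul_assoc]
    rw [t1, ← t2]
  refine ⟨?_, hcomm⟩
  have hC2 : Apᵀ * A * Apᵀ = Apᵀ := by
    have := congrArg Matrix.transpose h2
    rw [tT, hAs] at this
    exact this
  calc Apᵀ = Apᵀ * A * Apᵀ := hC2.symm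
    _ = Apᵀ * (A * Apᵀ) := by rw [Matrix.mul_assoc]
    _ = Apᵀ * (A * Ap) := by rw [s1, ← hcomm]
    _ = (Apᵀ * A) * Ap := by rw [Matrix.mul_assoc]
    _ = (A * Ap) * Ap := by rw [s2]
    _ = (Ap * A) * Ap := by rw [hcomm]
    _ = Ap := h2

theorem pseudoinverse_spectral_approx {n : ℕ} (X Y Xp Yp : Matrix (Fin n) (Fin n) ℝ) (ε : ℝ)
    (hX : X.PosSemidef) (hY : Y.PosSemidef)
    (hker : ∀ v : Fin n → ℝ, X *ᵥ v = 0 ↔ Y *ᵥ v = 0)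
    (hXp1 : X * Xp * X = X) (hXp2 : Xp * X * Xp = Xp)
    (hXp3 : (Xp * X)ᵀ = Xp * X) (hXp4 : (X * Xp)ᵀ = X * Xp)
    (hYp1 : Y * Yp * Y = Y) (hYp2 : Yp * Y * Yp = Yp)
    (hYp3 : (Yp * Y)ᵀ = Yp * Y) (hYp4 : (Y * Yp)ᵀ = Y * Yp)
    (h1 : (Y - Real.exp (-ε) • X).PosSemidef)
    (h2 : (Real.exp ε • X - Y).PosSemidef) :
    (Yp - Real.exp (-ε) • Xp).PosSemidef ∧ (Real.exp ε • Xp - Yp).PosSemidef := by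
  have hXs : Xᵀ = X := by rw [← conjTranspose_eq_transpose_of_trivial]; exact hX.1
  have hYs : Yᵀ = Y := by rw [← conjTranspose_eq_transpose_of_trivial]; exact hY.1
  obtain ⟨hXps, hXcomm⟩ := mp_symm X Xp hXs hXp1 hXp2 hXp3 hXp4
  obtain ⟨hYps, hYcomm⟩ := mp_symm Y Yp hYs hYp1 hYp2 hYp3 hYp4
  have hcpos : (0:ℝ) < Real.exp (-ε) := Real.exp_pos _
  have hce : Real.exp (-ε) * Real.exp ε = 1 := by
    rw [← Real.exp_add, neg_add_cancel, Real.exp_zero]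
  -- P := X * Xp and Q := Y * Yp are symmetric projections with the same range
  have hXP : X * (X * Xp) = X := by rw [hXcomm, ← Matrix.mul_assoc, hXp1]
  have hYQ : Y * (Y * Yp) = Y := by rw [hYcomm, ← Matrix.mul_assoc, hYp1]
  have hXQ : X * (Y * Yp) = X := by
    apply eq_of_mulVec
    intro v
    have hyv : Y *ᵥ ((Y * Yp) *ᵥ v - v) = 0 := by
      rw [mulVec_sub, mulVec_mulVec, hYQ, sub_self]
    have hxv := (hker _).mpr hyv
    rw [mulVec_sub, mulVec_mulVec, sub_eq_zero] at hxv
    exact hxv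
  have hYP : Y * (X * Xp) = Y := by
    apply eq_of_mulVec
    intro v
    have hxv : X *ᵥ ((X * Xp) *ᵥ v - v) = 0 := by
      rw [mulVec_sub, mulVec_mulVec, hXP, sub_self]
    have hyv := (hker _).mp hxv
    rw [mulVec_sub, mulVec_mulVec, sub_eq_zero] at hyv
    exact hyv
  have hQX : (Y * Yp) * X = X := by
    have := congrArg Matrix.transpose hXQ
    rw [transpose_mul, hYp4, hXs] at this
    exact this
  have hPY : (X * Xp) * Y = Y := by
    have := congrArg Matrix.transpose hYP
    rw [transpose_mul, hXp4, hYs] at this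
    exact this
  have hPQ : X * Xp = Y * Yp := by
    have hQP : (Y * Yp) * (X * Xp) = X * Xp := by rw [← Matrix.mul_assoc, hQX]
    have hPQ' : (X * Xp) * (Y * Yp) = Y * Yp := by rw [← Matrix.mul_assoc, hPY]
    calc X * Xp = (X * Xp)ᵀ := hXp4.symm
      _ = ((Y * Yp) * (X * Xp))ᵀ := by rw [hQP]
      _ = (X * Xp)ᵀ * (Y * Yp)ᵀ := transpose_mul _ _
      _ = (X * Xp) * (Y * Yp) := by rw [hXp4, hYp4]
      _ = Y * Yp := hPQ'
  -- Xp and Yp absorb the projection P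
  have hPXp : (X * Xp) * Xp = Xp := by rw [hXcomm]; exact hXp2
  have hXpP : Xp * (X * Xp) = Xp := by rw [← Matrix.mul_assoc]; exact hXp2
  have hPP : (X * Xp) * (X * Xp) = X * Xp := by
    rw [Matrix.mul_assoc X Xp (X * Xp), hXpP]
  have hQYp : (Y * Yp) * Yp = Yp := by rw [hYcomm]; exact hYp2
  have hYpQ : Yp * (Y * Yp) = Yp := by rw [← Matrix.mul_assoc]; exact hYp2
  have hXpPP : (X * Xp) * Xp * (X * Xp) = Xp := by rw [hPXp, hXpP]
  have hYpPP : (X * Xp) * Yp * (X * Xp) = Yp := by rw [hPQ, hQYp, hYpQ]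
  -- the scalar inequalities
  have main : ∀ v : Fin n → ℝ,
      Real.exp (-ε) * (v ⬝ᵥ (Xp *ᵥ v)) ≤ v ⬝ᵥ (Yp *ᵥ v) ∧
      v ⬝ᵥ (Yp *ᵥ v) ≤ Real.exp ε * (v ⬝ᵥ (Xp *ᵥ v)) := by
    intro v
    have hred : ∀ M : Matrix (Fin n) (Fin n) ℝ, (X * Xp) * M * (X * Xp) = M →
        v ⬝ᵥ (M *ᵥ v) = ((X * Xp) *ᵥ v) ⬝ᵥ (M *ᵥ ((X * Xp) *ᵥ v)) := by
      intro M hM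
      symm
      rw [flipDot]
      simp only [mulVec_mulVec]
      rw [hXp4, ← Matrix.mul_assoc, hM]
    have hredX := hred Xp hXpPP
    have hredY := hred Yp hYpPP
    set u : Fin n → ℝ := (X * Xp) *ᵥ v with hu
    have hPu : (X * Xp) *ᵥ u = u := by rw [hu, mulVec_mulVec, hPP]
    have hQu : (Y * Yp) *ᵥ u = u := by rw [← hPQ]; exact hPu
    set a : ℝ := u ⬝ᵥ (Xp *ᵥ u) with ha
    set b : ℝ := u ⬝ᵥ (Yp *ᵥ u) with hb
    have eXa : (Xp *ᵥ u) ⬝ᵥ (X *ᵥ (Xp *ᵥ u)) = a := by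
      rw [flipDot, hXps, mulVec_mulVec, mulVec_mulVec, hXp2]
    have eYb : (Yp *ᵥ u) ⬝ᵥ (Y *ᵥ (Yp *ᵥ u)) = b := by
      rw [flipDot, hYps, mulVec_mulVec, mulVec_mulVec, hYp2]
    have cmp2 : (Xp *ᵥ u) ⬝ᵥ (Y *ᵥ (Xp *ᵥ u)) ≤ Real.exp ε * a := by
      have := h2.dotProduct_mulVec_nonneg (Xp *ᵥ u)
      simp only [star_trivial, sub_mulVec, smul_mulVec, dotProduct_sub,
        dotProduct_smul, smul_eq_mul] at this
      rw [eXa] at this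
      linarith
    have cmp1 : Real.exp (-ε) * ((Yp *ᵥ u) ⬝ᵥ (X *ᵥ (Yp *ᵥ u))) ≤ b := by
      have := h1.dotProduct_mulVec_nonneg (Yp *ᵥ u)
      simp only [star_trivial, sub_mulVec, smul_mulVec, dotProduct_sub,
        dotProduct_smul, smul_eq_mul] at this
      rw [eYb] at this
      linarith
    have dirA : Real.exp (-ε) * a ≤ b := by
      have key := var_ineq Y Yp hY hYs hYp2 hYps u (Real.exp (-ε) • (Xp *ᵥ u)) hQu
      have lhs1 : u ⬝ᵥ (Real.exp (-ε) • (Xp *ᵥ u)) = Real.exp (-ε) * a := by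
        rw [dotProduct_smul, smul_eq_mul, ha]
      have lhs2 : (Real.exp (-ε) • (Xp *ᵥ u)) ⬝ᵥ (Y *ᵥ (Real.exp (-ε) • (Xp *ᵥ u))) =
          Real.exp (-ε) * (Real.exp (-ε) * ((Xp *ᵥ u) ⬝ᵥ (Y *ᵥ (Xp *ᵥ u)))) := by
        rw [mulVec_smul, dotProduct_smul, smul_dotProduct, smul_eq_mul, smul_eq_mul]
      rw [lhs1, lhs2] at key
      have h5 : Real.exp (-ε) * (Real.exp (-ε) * ((Xp *ᵥ u) ⬝ᵥ (Y *ᵥ (Xp *ᵥ u)))) ≤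
          Real.exp (-ε) * a := by
        calc Real.exp (-ε) * (Real.exp (-ε) * ((Xp *ᵥ u) ⬝ᵥ (Y *ᵥ (Xp *ᵥ u))))
            ≤ Real.exp (-ε) * (Real.exp (-ε) * (Real.exp ε * a)) := by
              exact mul_le_mul_of_nonneg_left
                (mul_le_mul_of_nonneg_left cmp2 hcpos.le) hcpos.le
          _ = (Real.exp (-ε) * Real.exp ε) * (Real.exp (-ε) * a) := by ring
          _ = Real.exp (-ε) * a := by rw [hce, one_mul]
      linarith
    have dirB : b ≤ Real.exp ε * a := by
      have key := var_ineq X Xp hX hXs hXp2 hXps u (Real.exp (-ε) • (Yp *ᵥ u)) hPu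
      have lhs1 : u ⬝ᵥ (Real.exp (-ε) • (Yp *ᵥ u)) = Real.exp (-ε) * b := by
        rw [dotProduct_smul, smul_eq_mul, hb]
      have lhs2 : (Real.exp (-ε) • (Yp *ᵥ u)) ⬝ᵥ (X *ᵥ (Real.exp (-ε) • (Yp *ᵥ u))) =
          Real.exp (-ε) * (Real.exp (-ε) * ((Yp *ᵥ u) ⬝ᵥ (X *ᵥ (Yp *ᵥ u)))) := by
        rw [mulVec_smul, dotProduct_smul, smul_dotProduct, smul_eq_mul, smul_eq_mul]
      rw [lhs1, lhs2] at key
      have h5 : Real.exp (-ε) * (Real.exp (-ε) * ((Yp *ᵥ u) ⬝ᵥ (X *ᵥ (Yp *ᵥ u)))) ≤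
          Real.exp (-ε) * b :=
        mul_le_mul_of_nonneg_left cmp1 hcpos.le
      have h6 : Real.exp (-ε) * b ≤ a := by linarith
      calc b = Real.exp ε * (Real.exp (-ε) * b) := by
            rw [← mul_assoc, mul_comm (Real.exp ε), hce, one_mul]
          _ ≤ Real.exp ε * a := mul_le_mul_of_nonneg_left h6 (Real.exp_pos ε).le
    rw [hredX, hredY]
    exact ⟨dirA, dirB⟩
  constructor
  · refine PosSemidef.of_dotProduct_mulVec_nonneg ?_ ?_
    · rw [IsHermitian, conjTranspose_eq_transpose_of_trivial, transpose_sub, transpose_smul,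
        hXps, hYps]
    · intro v
      have := (main v).1
      simp only [star_trivial, sub_mulVec, smul_mulVec, dotProduct_sub,
        dotProduct_smul, smul_eq_mul]
      linarith
  · refine PosSemidef.of_dotProduct_mulVec_nonneg ?_ ?_
    · rw [IsHermitian, conjTranspose_eq_transpose_of_trivial, transpose_sub, transpose_smul,
        hXps, hYps]
    · intro v
      have := (main v).2
      simp only [star_trivial, sub_mulVec, smul_mulVec, dotProduct_sub,
        dotProduct_smul, smul_eq_mul]
      linarith
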